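/- arXiv:2412.01670 — 2 statements merged into one kernel-verified Lean document; each statement's English description precedes it below -/
import Mathlib

section
/- There exists a constant C > 0 such that for all μ, K > 0, the quantity 4μ² ∫_{|k| ≥ K} |(μ|k| + 2k²)/(|k|(μ|k| + k²)²)|² dk is at most C/K. In other words, the L² norm of the residual potential V_K satisfies ‖V_K‖_{L²}² ≤ C/K. -/
open MeasureTheory Real

noncomputable section

abbrev E3 := EuclideanSpace ℝ (Fin 3)

/-- `‖V_K‖_{L²}² ≤ C/K`: there is `C > 0` such that for all `μ, K > 0`,
`4μ² ∫_{|k| ≥ K} |(μ|k| + 2k²)/(|k|(μ|k| + k²)²)|² dk ≤ C/K`. -/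
theorem VK_L2_bound :
    ∃ C > (0 : ℝ), ∀ μ K : ℝ, 0 < μ → 0 < K →
      4 * μ ^ 2 * (∫ k in {k : E3 | K ≤ ‖k‖},
        |(μ * ‖k‖ + 2 * ‖k‖ ^ 2) / (‖k‖ * (μ * ‖k‖ + ‖k‖ ^ 2) ^ 2)| ^ 2) ≤ C / K := by
  set v : ℝ := (volume (Metric.ball (0:E3) 1)).toReal with hv
  have hv0 : 0 ≤ v := ENNReal.toReal_nonneg
  refine ⟨48 * v + 1, by positivity, ?_⟩
  intro μ K hμ hK
  set S : Set E3 := {k : E3 | K ≤ ‖k‖} with hSdef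
  have hSm : MeasurableSet S := (isClosed_le continuous_const continuous_norm).measurableSet
  set g : E3 → ℝ := fun k => 16 / ‖k‖ ^ 4 with hg
  -- integrability of the dominating function
  have hgint : IntegrableOn g S := by
    have h1 : Integrable (fun k : E3 => 16 * (1 + K⁻¹) ^ 4 * (1 + ‖k‖) ^ (-(4:ℝ))) volume := by
      refine Integrable.const_mul ?_ _
      exact integrable_one_add_norm (by simp only [finrank_euclideanSpace_fin]; norm_num : ((Module.finrank ℝ E3 : ℝ)) < 4)
    refine Integrable.mono' h1.integrableOn ?_ ?_
    · exact ((measurable_const.div ((measurable_norm).pow_const 4))).aestronglyMeasurable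
    · rw [MeasureTheory.ae_restrict_iff' hSm]
      refine Filter.Eventually.of_forall fun k hk => ?_
      have hk' : K ≤ ‖k‖ := hk
      have hr : 0 < ‖k‖ := hK.trans_le hk'
      have h2 : (1:ℝ) + ‖k‖ ≤ (1 + K⁻¹) * ‖k‖ := by
        have h3 : K⁻¹ * K ≤ K⁻¹ * ‖k‖ :=
          mul_le_mul_of_nonneg_left hk' (inv_nonneg.2 hK.le)
        rw [inv_mul_cancel₀ hK.ne'] at h3
        nlinarith
      have h4 : ((1:ℝ) + ‖k‖) ^ 4 ≤ ((1 + K⁻¹) * ‖k‖) ^ 4 :=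
        pow_le_pow_left₀ (by positivity) h2 4
      have h5 : ((1:ℝ) + ‖k‖) ^ (-(4:ℝ)) = (((1:ℝ) + ‖k‖) ^ (4:ℕ))⁻¹ := by
        rw [← Real.rpow_natCast (1 + ‖k‖) 4, ← Real.rpow_neg (by positivity)]
        norm_num
      rw [Real.norm_eq_abs, abs_of_nonneg (by positivity), hg, h5, ← div_eq_mul_inv]
      rw [div_le_div_iff₀ (by positivity) (by positivity)]
      rw [mul_pow] at h4
      nlinarith [pow_pos hr 4, pow_pos (show (0:ℝ) < 1 + K⁻¹ by positivity) 4]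
  -- pointwise bound
  have hpt : ∀ k ∈ S, 4 * μ ^ 2 *
      |(μ * ‖k‖ + 2 * ‖k‖ ^ 2) / (‖k‖ * (μ * ‖k‖ + ‖k‖ ^ 2) ^ 2)| ^ 2 ≤ g k := by
    intro k hk
    have hk' : K ≤ ‖k‖ := hk
    have hr : 0 < ‖k‖ := hK.trans_le hk'
    set r := ‖k‖
    have hF0 : 0 ≤ (μ * r + 2 * r ^ 2) / (r * (μ * r + r ^ 2) ^ 2) := by positivity
    rw [abs_of_nonneg hF0]
    have hF : (μ * r + 2 * r ^ 2) / (r * (μ * r + r ^ 2) ^ 2) ≤ 2 / (μ * r ^ 2) := by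
      rw [div_le_div_iff₀ (by positivity) (by positivity)]
      nlinarith [mul_pos (mul_pos hμ hμ) (pow_pos hr 3), mul_pos hμ (pow_pos hr 4),
        pow_pos hr 5]
    have hF2 : ((μ * r + 2 * r ^ 2) / (r * (μ * r + r ^ 2) ^ 2)) ^ 2 ≤ (2 / (μ * r ^ 2)) ^ 2 :=
      pow_le_pow_left₀ hF0 hF 2
    have heq : 4 * μ ^ 2 * (2 / (μ * r ^ 2)) ^ 2 = 16 / r ^ 4 := by
      field_simp
      ring
    calc 4 * μ ^ 2 * ((μ * r + 2 * r ^ 2) / (r * (μ * r + r ^ 2) ^ 2)) ^ 2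
        ≤ 4 * μ ^ 2 * (2 / (μ * r ^ 2)) ^ 2 := by nlinarith [sq_nonneg μ]
      _ = 16 / r ^ 4 := heq
  -- compare integrals
  have hmono : 4 * μ ^ 2 * (∫ k in S,
      |(μ * ‖k‖ + 2 * ‖k‖ ^ 2) / (‖k‖ * (μ * ‖k‖ + ‖k‖ ^ 2) ^ 2)| ^ 2) ≤ ∫ k in S, g k := by
    rw [← MeasureTheory.integral_const_mul]
    refine integral_mono_of_nonneg ?_ hgint ?_
    · exact Filter.Eventually.of_forall fun k => by positivity
    · exact (MeasureTheory.ae_restrict_iff' hSm).2 (Filter.Eventually.of_forall hpt)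
  -- compute the integral of g over S
  have hcomp : ∫ k in S, g k = 48 * v / K := by
    have h6 : ∫ k in S, g k
        = ∫ k : E3, Set.indicator (Set.Ici K) (fun y => 16 / y ^ 4) ‖k‖ := by
      rw [← MeasureTheory.integral_indicator hSm]
      rfl
    rw [h6, MeasureTheory.integral_fun_norm_addHaar volume
      (fun y => Set.indicator (Set.Ici K) (fun y : ℝ => 16 / y ^ 4) y)]
    have hdim : Module.finrank ℝ E3 = 3 := by simp
    rw [hdim]
    have h7 : ∀ y : ℝ, y ^ (3 - 1) • Set.indicator (Set.Ici K) (fun y : ℝ => 16 / y ^ 4) y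
        = Set.indicator (Set.Ici K) (fun y : ℝ => 16 / y ^ 2) y := by
      intro y
      by_cases h : y ∈ Set.Ici K
      · have hy : 0 < y := hK.trans_le h
        rw [Set.indicator_of_mem h, Set.indicator_of_mem h, smul_eq_mul]
        field_simp
      · rw [Set.indicator_of_notMem h, Set.indicator_of_notMem h, smul_zero]
    simp only [h7]
    have h8 : ∫ y in Set.Ioi (0:ℝ), Set.indicator (Set.Ici K) (fun y : ℝ => 16 / y ^ 2) y
        = ∫ y in Set.Ioi K, 16 * y ^ (-(2:ℝ)) := by
      rw [MeasureTheory.setIntegral_indicator measurableSet_Ici,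
        Set.inter_eq_self_of_subset_right (show Set.Ici K ⊆ Set.Ioi (0:ℝ) from fun y hy => hK.trans_le hy),
        MeasureTheory.integral_Ici_eq_integral_Ioi]
      refine MeasureTheory.setIntegral_congr_fun measurableSet_Ioi fun y hy => ?_
      have hy0 : 0 < y := hK.trans hy
      rw [Real.rpow_neg hy0.le, show ((2:ℝ)) = ((2:ℕ):ℝ) by norm_num,
        Real.rpow_natCast, div_eq_mul_inv]
    rw [h8, MeasureTheory.integral_const_mul, integral_Ioi_rpow_of_lt (by norm_num) hK]
    have h9 : -K ^ (-(2:ℝ) + 1) / (-(2:ℝ) + 1) = K⁻¹ := by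
      norm_num
      rw [Real.rpow_neg_one]
    rw [h9]
    simp only [smul_eq_mul, nsmul_eq_mul]
    push_cast
    field_simp
    rw [hv, measureReal_def]
    ring
  calc 4 * μ ^ 2 * (∫ k in S,
      |(μ * ‖k‖ + 2 * ‖k‖ ^ 2) / (‖k‖ * (μ * ‖k‖ + ‖k‖ ^ 2) ^ 2)| ^ 2)
      ≤ ∫ k in S, g k := hmono
    _ = 48 * v / K := hcomp
    _ ≤ (48 * v + 1) / K := by gcongr; linarith
end
end

section
/- For every s with 0 < s ≤ 1/2 there exists C > 0 such that for all μ, K > 0: ∫_{|k| ≥ K} |k|^{-2s} · |k|² / (|k| (k² + μ|k|)²) dk ≤ C (μ + K)^{-2s}. Equivalently, ‖ω^{-s} k B_K‖_{L²} ≤ C (μ + K)^{-s} where B_K(k) = |k|^{-1/2} 𝟙_{|k| ≥ K}/(k² + μ|k|) and ω(k) = |k|. -/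
open MeasureTheory Real

noncomputable section

open Set Filter

lemma aux_integrable {p : ℝ} (hp : p < -1) {m K : ℝ} (hm : 0 < m) (hK : 0 < K) :
    IntegrableOn (fun y : ℝ => (y + m) ^ p) (Ioi K) := by
  refine (integrableOn_Ioi_rpow_of_lt hp hK).mono' ?_ ?_
  · refine (ContinuousOn.rpow_const ?_ ?_).aestronglyMeasurable measurableSet_Ioi
    · exact (continuous_id.add continuous_const).continuousOn
    · intro x hx
      have : (0:ℝ) < x := hK.trans hx
      exact Or.inl (by dsimp; linarith)
  · filter_upwards [ae_restrict_mem measurableSet_Ioi] with y hy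
    have hy' : (0:ℝ) < y := hK.trans hy
    rw [Real.norm_eq_abs, abs_of_nonneg (Real.rpow_nonneg (by linarith) _)]
    exact Real.rpow_le_rpow_of_nonpos hy' (by linarith) (by linarith)

lemma aux_value {p : ℝ} (hp : p < -1) {m K : ℝ} (hm : 0 < m) (hK : 0 < K) :
    ∫ y in Ioi K, (y + m) ^ p = -(K + m) ^ (p + 1) / (p + 1) := by
  have hd : ∀ x ∈ Ici K, HasDerivAt (fun y : ℝ => (y + m) ^ (p + 1) / (p + 1))
      ((x + m) ^ p) x := by
    intro x hx
    have hx' : (0:ℝ) < x + m := by have := hK.trans_le hx; linarith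
    have h1 : HasDerivAt (fun y : ℝ => y + m) 1 x := (hasDerivAt_id x).add_const m
    have h2 := (h1.rpow_const (p := p + 1) (Or.inl hx'.ne')).div_const (p + 1)
    refine h2.congr_deriv ?_
    have hne : p + 1 ≠ 0 := by linarith
    rw [add_sub_cancel_right, one_mul, mul_div_cancel_left₀ _ hne]
  have ht : Tendsto (fun y : ℝ => (y + m) ^ (p + 1) / (p + 1)) Filter.atTop (nhds (0 / (p + 1))) := by
    apply Filter.Tendsto.div_const
    have := (tendsto_rpow_neg_atTop (y := -(p+1)) (by linarith)).comp
      (Filter.tendsto_atTop_add_const_right Filter.atTop m Filter.tendsto_id)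
    simpa [Function.comp_def] using this
  have := integral_Ioi_of_hasDerivAt_of_tendsto' hd (aux_integrable hp hm hK) ht
  rw [this]; ring


/-- Weighted bound on the dressing form factor: for every `0 < s ≤ 1/2` there is `C > 0`
such that for all `μ, K > 0`,
`∫_{|k| ≥ K} |k|^{-2s} |k|² / (|k|(k² + μ|k|)²) dk ≤ C (μ + K)^{-2s}`,
i.e. `‖ω^{-s} k B_K‖_{L²} ≤ C (μ + K)^{-s}`. -/
theorem omega_s_kBK_bound (s : ℝ) (hs0 : 0 < s) (hs : s ≤ 1 / 2) :
    ∃ C > (0 : ℝ), ∀ μ K : ℝ, 0 < μ → 0 < K →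
      (∫ k in {k : E3 | K ≤ ‖k‖},
          ‖k‖ ^ (-(2 * s)) * ‖k‖ ^ 2 / (‖k‖ * (‖k‖ ^ 2 + μ * ‖k‖) ^ 2))
        ≤ C * (μ + K) ^ (-(2 * s)) := by
  set c : ℝ := (volume (Metric.ball (0:E3) 1)).toReal with hc
  have hcpos : 0 < c := by
    rw [hc]
    exact ENNReal.toReal_pos (Metric.measure_ball_pos volume 0 one_pos).ne'
      measure_ball_lt_top.ne
  refine ⟨3 * c / (2 * s), by positivity, ?_⟩
  intro μ K hμ hK
  set G : ℝ → ℝ := fun r => r ^ (-(2 * s)) * r ^ 2 / (r * (r ^ 2 + μ * r) ^ 2) with hG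
  have hdim : Module.finrank ℝ E3 = 3 := by
    simp [finrank_euclideanSpace]
  have hS : MeasurableSet {k : E3 | K ≤ ‖k‖} :=
    measurableSet_le measurable_const measurable_norm
  have step1 : (∫ k in {k : E3 | K ≤ ‖k‖},
      ‖k‖ ^ (-(2 * s)) * ‖k‖ ^ 2 / (‖k‖ * (‖k‖ ^ 2 + μ * ‖k‖) ^ 2))
      = ∫ k : E3, (Ici K).indicator G ‖k‖ := by
    rw [← integral_indicator hS]
    refine integral_congr_ae (Filter.Eventually.of_forall fun k => ?_)
    by_cases h : K ≤ ‖k‖ <;> simp [Set.indicator, h, hG]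
  rw [step1, integral_fun_norm_addHaar volume ((Ici K).indicator G), hdim]
  simp only [smul_eq_mul, nsmul_eq_mul]
  -- now: 3 * (c * ∫ y in Ioi 0, y ^ 2 * indicator (Ici K) G y) ≤ 3 * c / (2*s) * (μ+K)^(-(2s))
  have key : (∫ y in Ioi (0:ℝ), y ^ (3-1) * (Ici K).indicator G y)
      ≤ (μ + K) ^ (-(2*s)) / (2 * s) := by
    have hbound : ∀ y ∈ Ioi (0:ℝ), y ^ (3-1) * (Ici K).indicator G y
        ≤ (Ici K).indicator (fun y => (y + μ) ^ (-(1 + 2*s))) y := by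
      intro y hy
      have hy' : (0:ℝ) < y := hy
      by_cases h : K ≤ y
      · have hyμ : (0:ℝ) < y + μ := by linarith
        have h' : y ∈ Ici K := h
        rw [Set.indicator_of_mem h', Set.indicator_of_mem h']
        have hGy : y ^ (3-1) * G y = y ^ (1 - 2*s) / (y + μ) ^ 2 := by
          simp only [hG]
          have h1 : (y ^ 2 + μ * y) ^ 2 = y ^ 2 * (y + μ) ^ 2 := by ring
          rw [h1]
          rw [show (1 - 2*s : ℝ) = (-(2*s)) + 1 by ring,
            Real.rpow_add hy', Real.rpow_one]
          field_simp
        rw [hGy]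
        have h2 : y ^ (1 - 2*s) ≤ (y + μ) ^ (1 - 2*s) :=
          Real.rpow_le_rpow hy'.le (by linarith) (by linarith)
        calc y ^ (1 - 2*s) / (y + μ) ^ 2 ≤ (y + μ) ^ (1 - 2*s) / (y + μ) ^ 2 := by
              gcongr
          _ = (y + μ) ^ (-(1 + 2*s)) := by
              rw [show ((y+μ):ℝ) ^ (2:ℕ) = (y+μ) ^ (2:ℝ) by
                  rw [← Real.rpow_natCast]; norm_num,
                ← Real.rpow_sub hyμ]
              norm_num
              ring_nf
      · have h' : y ∉ Ici K := fun hy2 => h hy2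
        rw [Set.indicator_of_notMem h', Set.indicator_of_notMem h', mul_zero]
    have hp : (-(1 + 2*s) : ℝ) < -1 := by linarith
    have hint : IntegrableOn (fun y : ℝ => (Ici K).indicator
        (fun y => (y + μ) ^ (-(1 + 2*s))) y) (Ioi 0) := by
      rw [IntegrableOn, integrable_indicator_iff measurableSet_Ici,
        IntegrableOn, Measure.restrict_restrict measurableSet_Ici]
      have : Ici K ∩ Ioi 0 = Ici K := inter_eq_left.2 fun x hx => lt_of_lt_of_le hK hx
      rw [this, ← IntegrableOn, integrableOn_Ici_iff_integrableOn_Ioi]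
      exact aux_integrable hp hμ hK
    have hmono : (∫ y in Ioi (0:ℝ), y ^ (3-1) * (Ici K).indicator G y)
        ≤ ∫ y in Ioi (0:ℝ), (Ici K).indicator (fun y => (y + μ) ^ (-(1 + 2*s))) y := by
      refine integral_mono_of_nonneg ?_ hint ?_
      · filter_upwards [ae_restrict_mem measurableSet_Ioi] with y hy
        have hy' : (0:ℝ) < y := hy
        have : 0 ≤ (Ici K).indicator G y := by
          apply Set.indicator_nonneg
          intro x hx
          have hx' : (0:ℝ) < x := lt_of_lt_of_le hK hx
          rw [hG]
          positivity
        positivity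
      · filter_upwards [ae_restrict_mem measurableSet_Ioi] with y hy
        exact hbound y hy
    have hval : (∫ y in Ioi (0:ℝ), (Ici K).indicator
        (fun y => (y + μ) ^ (-(1 + 2*s))) y) = (μ + K) ^ (-(2*s)) / (2 * s) := by
      rw [integral_indicator measurableSet_Ici,
        Measure.restrict_restrict measurableSet_Ici,
        show Ici K ∩ Ioi 0 = Ici K from inter_eq_left.2 fun x hx => lt_of_lt_of_le hK hx,
        integral_Ici_eq_integral_Ioi, aux_value hp hμ hK]
      rw [show (-(1 + 2*s) + 1 : ℝ) = -(2*s) by ring, show (K + μ : ℝ) = μ + K by ring]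
      field_simp
    rw [← hval]; exact hmono
  calc (3:ℝ) * (c * ∫ y in Ioi (0:ℝ), y ^ (3-1) * (Ici K).indicator G y)
      ≤ 3 * (c * ((μ + K) ^ (-(2*s)) / (2 * s))) := by
        gcongr
    _ = 3 * c / (2 * s) * (μ + K) ^ (-(2*s)) := by ring
end
end
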